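/- For every nonnegative integer d, the normalized Carlitz polynomial satisfies E_d(z) = Σ_{i=0}^{d} z^{q^i} / (D_i · ℓ_{d−i}^{q^i}) in K[z]. -/

import Mathlib

noncomputable section
open Polynomial

variable (Fq : Type) [Field Fq] [Fintype Fq]

/-- The polynomial `∑ i, c i * θ^i` of degree `< d` determined by a coefficient
tuple `c : Fin d → Fq`; as `c` ranges over all tuples this enumerates `A(d)`. -/
def polyOf {d : ℕ} (c : Fin d → Fq) : Polynomial Fq :=
  ∑ i : Fin d, C (c i) * X ^ (i : ℕ)

/-- `D_d`, the product of all monic polynomials of degree `d` in `A = 𝔽_q[θ]`. -/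
def Dmonic (d : ℕ) : Polynomial Fq :=
  ∏ c : Fin d → Fq, (X ^ d + polyOf Fq c)

/-- `ℓ_e := ∏_{j=1}^{e} (θ - θ^{q^j}) ∈ A` (so `ℓ_0 = 1`). -/
def lcar (e : ℕ) : Polynomial Fq :=
  ∏ j ∈ Finset.Icc 1 e, ((X : Polynomial Fq) - X ^ (Fintype.card Fq) ^ j)

/-- The normalized Carlitz polynomial `E_d(z) = D_d⁻¹ ∏_{a ∈ A(d)} (z - a) ∈ K[z]`. -/
def Ecar (d : ℕ) : Polynomial (RatFunc Fq) :=
  C (algebraMap (Polynomial Fq) (RatFunc Fq) (Dmonic Fq d))⁻¹ *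
    ∏ c : Fin d → Fq, (X - C (algebraMap (Polynomial Fq) (RatFunc Fq) (polyOf Fq c)))

set_option linter.unusedSectionVars false
set_option maxHeartbeats 1000000

namespace CarAux

/-- `e_d(z) = ∏_{a ∈ A(d)} (z - a)`, the non-normalized Carlitz polynomial, over `K`. -/
def em (d : ℕ) : Polynomial (RatFunc Fq) :=
  ∏ c : Fin d → Fq, (X - C (algebraMap (Polynomial Fq) (RatFunc Fq) (polyOf Fq c)))

/-- `θ^{q^i}` as an element of `K`. -/
def xq (i : ℕ) : RatFunc Fq := algebraMap (Polynomial Fq) (RatFunc Fq) (X ^ Fintype.card Fq ^ i)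

/-- Complete homogeneous symmetric functions `h_m(x_off, …, x_{off+n})` of the `xq`. -/
def Hc (off : ℕ) : ℕ → ℕ → RatFunc Fq
  | _, 0 => 1
  | 0, m + 1 => xq Fq off * Hc off 0 m
  | n + 1, m + 1 => Hc off n (m + 1) + xq Fq (off + n + 1) * Hc off (n + 1) m

variable {Fq}

local notation "ιF" => algebraMap (Polynomial Fq) (RatFunc Fq)
local notation "qc" => Fintype.card Fq

lemma polyOf_degree_lt {d : ℕ} (c : Fin d → Fq) : (polyOf Fq c).degree < (d : ℕ) := by
  apply lt_of_le_of_lt (degree_sum_le _ _)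
  rw [Finset.sup_lt_iff (by exact_mod_cast WithBot.bot_lt_coe d)]
  intro i _
  exact lt_of_le_of_lt (degree_C_mul_X_pow_le _ _) (by exact_mod_cast i.isLt)

lemma polyOf_zero {d : ℕ} : polyOf Fq (0 : Fin d → Fq) = 0 := by
  simp [polyOf]

lemma polyOf_snoc {d : ℕ} (c : Fin d → Fq) (t : Fq) :
    polyOf Fq (Fin.snoc c t) = polyOf Fq c + C t * X ^ d := by
  rw [polyOf, Fin.sum_univ_castSucc]
  simp [polyOf]

lemma polyOf_smul {d : ℕ} (t : Fq) (c : Fin d → Fq) :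
    polyOf Fq (fun i => t * c i) = C t * polyOf Fq c := by
  simp [polyOf, Finset.mul_sum, mul_assoc]

lemma polyOf_neg {d : ℕ} (c : Fin d → Fq) : polyOf Fq (-c) = - polyOf Fq c := by
  simp [polyOf]

lemma monic_factor {d : ℕ} (c : Fin d → Fq) : (X ^ d + polyOf Fq c).Monic :=
  monic_X_pow_add (polyOf_degree_lt c)

lemma Dmonic_ne_zero (d : ℕ) : Dmonic Fq d ≠ 0 :=
  Finset.prod_ne_zero_iff.2 fun c _ => (monic_factor c).ne_zero

lemma Dmonic_zero : Dmonic Fq 0 = 1 := by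
  simp [Dmonic, polyOf]

lemma hq1 : 1 < qc := Fintype.one_lt_card

lemma prodFqX : ∏ t : Fq, (X - C t : Polynomial Fq) = X ^ Fintype.card Fq - X := by
  have hm : (X ^ Fintype.card Fq - X : Polynomial Fq).Monic :=
    monic_X_pow_sub (by simpa using Fintype.one_lt_card)
  have hr := FiniteField.roots_X_pow_card_sub_X Fq
  have hcard : (X ^ Fintype.card Fq - X : Polynomial Fq).roots.card =
      (X ^ Fintype.card Fq - X : Polynomial Fq).natDegree := by
    rw [hr, FiniteField.X_pow_card_sub_X_natDegree_eq Fq Fintype.one_lt_card]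
    simp
  have := prod_multiset_X_sub_C_of_monic_of_roots_card_eq hm hcard
  rw [hr] at this
  rw [← this]
  rfl

lemma pcharK : CharP (RatFunc Fq) (ringChar Fq) := by
  have h : Function.Injective ((algebraMap (Polynomial Fq) (RatFunc Fq)).comp
      (C : Fq →+* Polynomial Fq)) :=
    (RatFunc.algebraMap_injective Fq).comp (C_injective (R := Fq))
  exact charP_of_injective_ringHom h _

lemma add_pow_card {R : Type} [CommRing R] (hc : CharP R (ringChar Fq)) (m : ℕ) (x y : R) :
    (x + y) ^ Fintype.card Fq ^ m = x ^ Fintype.card Fq ^ m + y ^ Fintype.card Fq ^ m := by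
  obtain ⟨n, hp, hcard⟩ := FiniteField.card Fq (ringChar Fq)
  haveI := Fact.mk hp
  rw [hcard, ← pow_mul, add_pow_char_pow, pow_mul]

lemma sub_pow_card {R : Type} [CommRing R] (hc : CharP R (ringChar Fq)) (m : ℕ) (x y : R) :
    (x - y) ^ Fintype.card Fq ^ m = x ^ Fintype.card Fq ^ m - y ^ Fintype.card Fq ^ m := by
  obtain ⟨n, hp, hcard⟩ := FiniteField.card Fq (ringChar Fq)
  haveI := Fact.mk hp
  rw [hcard, ← pow_mul, sub_pow_char_pow, pow_mul]

lemma sum_pow_card {R σ : Type} [CommRing R] (hc : CharP R (ringChar Fq)) (m : ℕ)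
    (s : Finset σ) (f : σ → R) :
    (∑ i ∈ s, f i) ^ Fintype.card Fq ^ m = ∑ i ∈ s, f i ^ Fintype.card Fq ^ m := by
  classical
  induction s using Finset.induction with
  | empty => simp [zero_pow (pow_ne_zero m (Fintype.card_ne_zero (α := Fq)))]
  | @insert a s h ih => rw [Finset.sum_insert h, Finset.sum_insert h, add_pow_card hc, ih]

lemma pcharPK : CharP (Polynomial (RatFunc Fq)) (ringChar Fq) := by
  haveI := pcharK (Fq := Fq)
  have h : Function.Injective (C : RatFunc Fq →+* Polynomial (RatFunc Fq)) :=
    C_injective (R := RatFunc Fq)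
  exact charP_of_injective_ringHom h _

lemma em_zero : em Fq 0 = X := by
  simp [em, polyOf]

lemma prodFqW (W : Polynomial (RatFunc Fq)) :
    ∏ t : Fq, (W - C (ιF (C t))) = W ^ qc - W := by
  have h := congrArg (eval₂RingHom ((C : RatFunc Fq →+* Polynomial (RatFunc Fq)).comp
      ((algebraMap (Polynomial Fq) (RatFunc Fq)).comp (C : Fq →+* Polynomial Fq))) W)
      (prodFqX (Fq := Fq))
  simpa [map_prod, coe_eval₂RingHom, eval₂_sub, eval₂_pow] using h

lemma em_eval_nat (d : ℕ) : (em Fq d).eval (ιF (X ^ d)) = ιF (Dmonic Fq d) := by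
  rw [em, eval_prod, Dmonic, map_prod]
  refine Fintype.prod_equiv (Equiv.neg _) _ _ fun c => ?_
  simp [polyOf_neg, map_add]
  ring

lemma em_eval_zero (d : ℕ) : (em Fq d).eval 0 = 0 := by
  rw [em, eval_prod]
  refine Finset.prod_eq_zero (Finset.mem_univ (0 : Fin d → Fq)) ?_
  simp [polyOf_zero]

lemma em_eval_mul (d : ℕ) (t : Fq) (w : RatFunc Fq) :
    (em Fq d).eval (ιF (C t) * w) = ιF (C t) * (em Fq d).eval w := by
  rcases eq_or_ne t 0 with rfl | ht
  · simp [em_eval_zero]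
  · rw [em, eval_prod, eval_prod]
    have key := Fintype.prod_equiv (Equiv.piCongrRight fun _ : Fin d => Equiv.mulLeft₀ t ht)
      (fun c => ιF (C t) * eval w (X - C (ιF (polyOf Fq c))))
      (fun c => eval (ιF (C t) * w) (X - C (ιF (polyOf Fq c)))) ?_
    · rw [← key, Finset.prod_mul_distrib, Finset.prod_const]
      have hcard : (Finset.univ : Finset (Fin d → Fq)).card = Fintype.card Fq ^ d := by
        rw [Finset.card_univ, Fintype.card_fun, Fintype.card_fin]
      rw [hcard, ← map_pow, ← C_pow, FiniteField.pow_card_pow]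
    · intro c
      have hpc : polyOf Fq ((Equiv.piCongrRight fun _ : Fin d => Equiv.mulLeft₀ t ht) c)
          = C t * polyOf Fq c := by
        exact polyOf_smul t c
      simp only [eval_sub, eval_X, eval_C, hpc, map_mul, mul_sub, eval_mul]

lemma prod_linear (Y : Polynomial (RatFunc Fq)) (α : RatFunc Fq) (hα : α ≠ 0) :
    ∏ t : Fq, (Y - C (ιF (C t) * α)) = Y ^ qc - C (α ^ (qc - 1)) * Y := by
  have h1 : ∀ t : Fq, Y - C (ιF (C t) * α) = C α * (C α⁻¹ * Y - C (ιF (C t))) := by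
    intro t
    have : (C α : Polynomial (RatFunc Fq)) * C α⁻¹ = 1 := by
      rw [← C_mul, mul_inv_cancel₀ hα, C_1]
    calc Y - C (ιF (C t) * α) = (C α * C α⁻¹) * Y - C α * C (ιF (C t)) := by
          rw [this, one_mul, ← C_mul, mul_comm α]
      _ = C α * (C α⁻¹ * Y - C (ιF (C t))) := by ring
  rw [Finset.prod_congr rfl (fun t _ => h1 t), Finset.prod_mul_distrib, Finset.prod_const,
    prodFqW, Finset.card_univ]
  have e1 : (C α : Polynomial (RatFunc Fq)) ^ qc * (C α⁻¹ * Y) ^ qc = Y ^ qc := by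
    rw [mul_pow, ← mul_assoc, ← mul_pow, ← C_mul, mul_inv_cancel₀ hα, C_1, one_pow, one_mul]
  have hα' : α ^ qc * α⁻¹ = α ^ (qc - 1) := by
    conv_lhs => rw [show qc = (qc - 1) + 1 from (Nat.succ_pred_eq_of_pos Fintype.card_pos).symm,
      pow_succ, mul_assoc, mul_inv_cancel₀ hα, mul_one]
  have e2 : (C α : Polynomial (RatFunc Fq)) ^ qc * (C α⁻¹ * Y) = C (α ^ (qc - 1)) * Y := by
    rw [← mul_assoc, ← C_pow, ← C_mul, hα']
  rw [mul_sub, e1, e2]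

lemma em_succ_of (d : ℕ)
    (h : ∀ w : RatFunc Fq, (em Fq d).comp (X + C w) = em Fq d + C ((em Fq d).eval w)) :
    em Fq (d + 1) = em Fq d ^ qc - C (ιF (Dmonic Fq d) ^ (qc - 1)) * em Fq d := by
  have e0 : em Fq (d+1) =
      ∏ p : Fq × (Fin d → Fq), (X - C (ιF (polyOf Fq (Fin.snoc p.2 p.1)))) := by
    rw [em]
    exact (Fintype.prod_equiv (Fin.snocEquiv (fun _ => Fq)) _ _ fun p => rfl).symm
  rw [e0, Fintype.prod_prod_type]
  have e1 : ∀ t : Fq, ∏ c : Fin d → Fq, (X - C (ιF (polyOf Fq (Fin.snoc c t))))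
      = em Fq d - C (ιF (C t) * ιF (Dmonic Fq d)) := by
    intro t
    have e2 : ∀ c : Fin d → Fq, X - C (ιF (polyOf Fq (Fin.snoc c t)))
        = (X - C (ιF (polyOf Fq c))).comp (X + C (-(ιF (C t * X ^ d)))) := by
      intro c
      rw [polyOf_snoc, sub_comp, X_comp, C_comp, map_add, map_mul, C_add, C_mul, map_neg]
      rw [C_mul]
      ring
    rw [Finset.prod_congr rfl (fun c _ => e2 c), ← prod_comp, ← em]
    rw [h]
    have hv : (em Fq d).eval (-(ιF (C t * X ^ d))) = -(ιF (C t) * ιF (Dmonic Fq d)) := by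
      have h2 : -(ιF (C t * X ^ d)) = ιF (C (-t)) * ιF (X ^ d) := by
        rw [map_mul, C_neg, map_neg]; ring
      rw [h2, em_eval_mul, em_eval_nat, C_neg, map_neg]; ring
    rw [hv, C_neg, ← sub_eq_add_neg]
  rw [Finset.prod_congr rfl (fun t _ => e1 t)]
  exact prod_linear (em Fq d) (ιF (Dmonic Fq d))
    (RatFunc.algebraMap_ne_zero (Dmonic_ne_zero (Fq := Fq) d))

lemma em_comp_add (d : ℕ) :
    ∀ w : RatFunc Fq, (em Fq d).comp (X + C w) = em Fq d + C ((em Fq d).eval w) := by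
  induction d with
  | zero => intro w; simp [em_zero]
  | succ d ih =>
    intro w
    have hs := em_succ_of d ih
    have hev : (em Fq (d+1)).eval w
        = ((em Fq d).eval w) ^ qc - (ιF (Dmonic Fq d) ^ (qc - 1)) * (em Fq d).eval w := by
      rw [hs]; simp
    have frob : (em Fq d + C ((em Fq d).eval w)) ^ qc
        = em Fq d ^ qc + C (((em Fq d).eval w) ^ qc) := by
      have h1 := add_pow_card (pcharPK (Fq := Fq)) 1 (em Fq d) (C ((em Fq d).eval w))
      rw [pow_one] at h1
      rw [h1, ← C_pow]
    rw [hev, hs, sub_comp, pow_comp, mul_comp, C_comp, ih w, frob, C_sub, C_mul]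
    ring

lemma em_succ (d : ℕ) :
    em Fq (d + 1) = em Fq d ^ qc - C (ιF (Dmonic Fq d) ^ (qc - 1)) * em Fq d :=
  em_succ_of d (em_comp_add d)

lemma addq (x y : RatFunc Fq) : (x + y) ^ qc = x ^ qc + y ^ qc := by
  have := add_pow_card (pcharK (Fq := Fq)) 1 x y
  rwa [pow_one] at this

lemma Hc_zero (off n : ℕ) : Hc Fq off n 0 = 1 := by
  cases n <;> rw [Hc]

lemma Hc_base (off m : ℕ) : Hc Fq off 0 (m + 1) = xq Fq off * Hc Fq off 0 m := by rw [Hc]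

lemma Hc_step (off n m : ℕ) :
    Hc Fq off (n + 1) (m + 1)
      = Hc Fq off n (m + 1) + xq Fq (off + n + 1) * Hc Fq off (n + 1) m := by rw [Hc]

lemma xq_pow (i : ℕ) : xq Fq i ^ qc = xq Fq (i + 1) := by
  rw [xq, ← map_pow, ← pow_mul, ← pow_succ, xq]

lemma Hc_frob (n : ℕ) : ∀ m off, (Hc Fq off n m) ^ qc = Hc Fq (off + 1) n m := by
  induction n with
  | zero =>
    intro m
    induction m with
    | zero => intro off; rw [Hc_zero, Hc_zero, one_pow]
    | succ m ih => intro off; rw [Hc_base, mul_pow, ih, xq_pow, Hc_base]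
  | succ n ihn =>
    intro m
    induction m with
    | zero => intro off; rw [Hc_zero, Hc_zero, one_pow]
    | succ m ihm =>
      intro off
      rw [Hc_step, addq, mul_pow, ihn, ihm, xq_pow, Hc_step]
      congr 3
      omega

lemma Hc_head (n : ℕ) : ∀ m off, Hc Fq off (n + 1) (m + 1)
    = Hc Fq (off + 1) n (m + 1) + xq Fq off * Hc Fq off (n + 1) m := by
  induction n with
  | zero =>
    intro m
    induction m with
    | zero =>
      intro off
      have e1 := Hc_step (Fq := Fq) off 0 0
      have e2 := Hc_base (Fq := Fq) off 0
      have e3 := Hc_base (Fq := Fq) (off + 1) 0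
      have z1 := Hc_zero (Fq := Fq) off 0
      have z2 := Hc_zero (Fq := Fq) off 1
      have z3 := Hc_zero (Fq := Fq) (off + 1) 0
      have h0 : off + 0 + 1 = off + 1 := by omega
      rw [h0] at e1
      linear_combination e1 + e2 - e3 + xq Fq (off + 1) * z2 + xq Fq off * z1
        - xq Fq (off + 1) * z3 - xq Fq off * z2
    | succ m ih =>
      intro off
      have E1 := Hc_step (Fq := Fq) off 0 (m + 1)
      have E2 := Hc_base (Fq := Fq) off (m + 1)
      have E3 := Hc_step (Fq := Fq) off 0 m
      have E4 := ih off
      have E5 := Hc_base (Fq := Fq) (off + 1) (m + 1)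
      have h0 : off + 0 + 1 = off + 1 := by omega
      rw [h0] at E1 E3
      linear_combination E1 + E2 - xq Fq off * E3 + xq Fq (off + 1) * E4 - E5
  | succ n ihn =>
    intro m
    induction m with
    | zero =>
      intro off
      have G1 := Hc_step (Fq := Fq) off (n + 1) 0
      have G2 := ihn 0 off
      have G3 := Hc_step (Fq := Fq) (off + 1) n 0
      have z1 := Hc_zero (Fq := Fq) off (n + 1)
      have z3 := Hc_zero (Fq := Fq) (off + 1) (n + 1)
      have h0 : off + 1 + n + 1 = off + (n + 1) + 1 := by omega
      rw [h0] at G3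
      have z2' := Hc_zero (Fq := Fq) off (n + 1 + 1)
      linear_combination G1 + G2 - G3 + xq Fq off * (z1 - z2')
        + xq Fq (off + (n + 1) + 1) * (z2' - z3)
    | succ m ihm =>
      intro off
      have F1 := Hc_step (Fq := Fq) off (n + 1) (m + 1)
      have F2 := ihn (m + 1) off
      have F3 := ihm off
      have F4 := Hc_step (Fq := Fq) (off + 1) n (m + 1)
      have F5 := Hc_step (Fq := Fq) off (n + 1) m
      have h0 : off + 1 + n + 1 = off + (n + 1) + 1 := by omega
      rw [h0] at F4
      linear_combination F1 + F2 + xq Fq (off + (n + 1) + 1) * F3 - F4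
        - xq Fq off * F5

lemma pow_qc_sub_one_mul (a : RatFunc Fq) : a ^ (qc - 1) * a = a ^ qc := by
  rw [← pow_succ, Nat.sub_add_cancel Fintype.card_pos]

lemma em_eval_pow (d : ℕ) :
    ∀ m, (em Fq d).eval (ιF (X ^ (d + m))) = ιF (Dmonic Fq d) * Hc Fq 0 d m := by
  induction d with
  | zero =>
    intro m
    have h1 : ∀ k, Hc Fq 0 0 k = ιF (X ^ k) := by
      intro k
      induction k with
      | zero => rw [Hc_zero, pow_zero, map_one]
      | succ k ih => rw [Hc_base, ih, xq, pow_zero, pow_one, ← map_mul, ← pow_succ']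
    rw [em_zero, eval_X, Dmonic_zero, map_one, one_mul, h1 m, zero_add]
  | succ d ih =>
    have key : ∀ m, (em Fq (d + 1)).eval (ιF (X ^ (d + 1 + m)))
        = ιF (Dmonic Fq d) ^ qc * (xq Fq (d + 1) - xq Fq 0) * Hc Fq 0 (d + 1) m := by
      intro m
      have hx : d + 1 + m = d + (m + 1) := by omega
      have hv := ih (m + 1)
      rw [em_succ, eval_sub, eval_pow, eval_mul, eval_C, hx, hv]
      have e1 := Hc_step (Fq := Fq) 0 d m
      have e2 : Hc Fq 0 (d + 1) (m + 1) = Hc Fq 1 d (m + 1) + xq Fq 0 * Hc Fq 0 (d + 1) m :=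
        Hc_head d m 0
      have frob : (ιF (Dmonic Fq d) * Hc Fq 0 d (m + 1)) ^ qc
          = ιF (Dmonic Fq d) ^ qc * Hc Fq 1 d (m + 1) := by
        rw [mul_pow, Hc_frob]
      have hmu : ιF (Dmonic Fq d) ^ (qc - 1) * (ιF (Dmonic Fq d) * Hc Fq 0 d (m + 1))
          = ιF (Dmonic Fq d) ^ qc * Hc Fq 0 d (m + 1) := by
        rw [← mul_assoc, pow_qc_sub_one_mul]
      rw [frob, hmu]
      have h0 : (0 : ℕ) + d + 1 = d + 1 := by omega
      rw [h0] at e1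
      linear_combination ιF (Dmonic Fq d) ^ qc * (e1 - e2)
    have hD : ιF (Dmonic Fq (d + 1)) = ιF (Dmonic Fq d) ^ qc * (xq Fq (d + 1) - xq Fq 0) := by
      have := key 0
      rw [Nat.add_zero, em_eval_nat, Hc_zero, mul_one] at this
      exact this
    intro m
    rw [key m, ← hD]

lemma xq_pow_pow (a m : ℕ) : xq Fq a ^ qc ^ m = xq Fq (a + m) := by
  rw [xq, xq, ← map_pow, ← pow_mul, ← pow_add]

lemma xq_zero : xq Fq 0 = ιF X := by rw [xq, pow_zero, pow_one]

lemma Drec (d : ℕ) :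
    ιF (Dmonic Fq (d + 1)) = ιF (Dmonic Fq d) ^ qc * (xq Fq (d + 1) - xq Fq 0) := by
  have h1 := em_eval_nat (Fq := Fq) (d + 1)
  rw [em_succ, eval_sub, eval_pow, eval_mul, eval_C] at h1
  have hv : (em Fq d).eval (ιF (X ^ (d + 1))) = ιF (Dmonic Fq d) * Hc Fq 0 d 1 :=
    em_eval_pow d 1
  rw [hv, mul_pow, Hc_frob] at h1
  have hmu : ιF (Dmonic Fq d) ^ (qc - 1) * (ιF (Dmonic Fq d) * Hc Fq 0 d 1)
      = ιF (Dmonic Fq d) ^ qc * Hc Fq 0 d 1 := by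
    rw [← mul_assoc, pow_qc_sub_one_mul]
  rw [hmu] at h1
  have e1 := Hc_step (Fq := Fq) 0 d 0
  have e2 := Hc_head (Fq := Fq) d 0 0
  have z1 := Hc_zero (Fq := Fq) 0 (d + 1)
  simp only [Nat.zero_add] at h1 e1 e2
  linear_combination -h1 + ιF (Dmonic Fq d) ^ qc * (e1 - e2)
    + (ιF (Dmonic Fq d) ^ qc * (xq Fq (d + 1) - xq Fq 0)) * z1

lemma lcar_zero : lcar Fq 0 = 1 := by
  simp [lcar]

lemma lcar_succ (e : ℕ) : lcar Fq (e + 1) = lcar Fq e * (X - X ^ qc ^ (e + 1)) := by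
  rw [lcar, lcar, Finset.prod_Icc_succ_top (Nat.le_add_left 1 e)]

lemma X_pow_ne (i j : ℕ) (h : i < j) : (X : Polynomial Fq) ^ qc ^ i ≠ X ^ qc ^ j := by
  intro hEq
  have := congrArg natDegree hEq
  rw [natDegree_X_pow, natDegree_X_pow] at this
  have := Nat.pow_right_injective (hq1 (Fq := Fq)) this
  omega

lemma xq_sub_ne (i j : ℕ) (h : i < j) : xq Fq i - xq Fq j ≠ 0 := by
  rw [xq, xq, ← map_sub]
  exact RatFunc.algebraMap_ne_zero (sub_ne_zero.mpr (X_pow_ne i j h))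

lemma lcar_ne_zero (e : ℕ) : lcar Fq e ≠ 0 := by
  induction e with
  | zero => rw [lcar_zero]; exact one_ne_zero
  | succ e ih =>
    rw [lcar_succ]
    refine mul_ne_zero ih ?_
    have := X_pow_ne (Fq := Fq) 0 (e + 1) (by omega)
    rw [pow_zero, pow_one] at this
    exact sub_ne_zero.mpr this

lemma iota_lcar (e : ℕ) :
    ιF (lcar Fq (e + 1)) = ιF (lcar Fq e) * (xq Fq 0 - xq Fq (e + 1)) := by
  rw [lcar_succ, map_mul, map_sub, xq_zero, xq]

lemma lcar_pow_iota (e m : ℕ) :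
    ιF (lcar Fq (e + 1) ^ qc ^ m)
      = ιF (lcar Fq e) ^ qc ^ m * (xq Fq m - xq Fq (m + e + 1)) := by
  rw [map_pow, iota_lcar, mul_pow, sub_pow_card (pcharK (Fq := Fq)) m, xq_pow_pow, xq_pow_pow]
  have h1 : (0 : ℕ) + m = m := by omega
  have h2 : e + 1 + m = m + e + 1 := by omega
  rw [h1, h2]

lemma scalar_mid (i e : ℕ) :
    (ιF (Dmonic Fq (i + 1) * lcar Fq (e + 1) ^ qc ^ (i + 1)))⁻¹
      = (xq Fq (i + e + 2) - xq Fq 0)⁻¹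
          * ((ιF (Dmonic Fq i * lcar Fq (e + 1) ^ qc ^ i))⁻¹ ^ qc)
        - (xq Fq (i + e + 2) - xq Fq 0)⁻¹
          * (ιF (Dmonic Fq (i + 1) * lcar Fq e ^ qc ^ (i + 1)))⁻¹ := by
  have ha : ιF (Dmonic Fq i) ≠ 0 := RatFunc.algebraMap_ne_zero (Dmonic_ne_zero i)
  have hl : ιF (lcar Fq e) ≠ 0 := RatFunc.algebraMap_ne_zero (lcar_ne_zero e)
  have hx1 : xq Fq (i + 1) - xq Fq 0 ≠ 0 := by
    have := xq_sub_ne (Fq := Fq) 0 (i + 1) (by omega)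
    intro h0; apply this; linear_combination -h0
  have hx2 : xq Fq (i + 1) - xq Fq (i + e + 2) ≠ 0 :=
    xq_sub_ne (i + 1) (i + e + 2) (by omega)
  have hx3 : xq Fq (i + e + 2) - xq Fq 0 ≠ 0 := by
    have := xq_sub_ne (Fq := Fq) 0 (i + e + 2) (by omega)
    intro h0; apply this; linear_combination -h0
  have hLL : ιF (lcar Fq (e + 1) ^ qc ^ (i + 1))
      = ιF (lcar Fq e) ^ qc ^ (i + 1) * (xq Fq (i + 1) - xq Fq (i + e + 2)) := by
    rw [lcar_pow_iota]
    have : i + 1 + e + 1 = i + e + 2 := by omega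
    rw [this]
  have hLL' : ιF (lcar Fq (e + 1) ^ qc ^ i) ^ qc
      = ιF (lcar Fq e) ^ qc ^ (i + 1) * (xq Fq (i + 1) - xq Fq (i + e + 2)) := by
    rw [← map_pow, ← pow_mul, ← pow_succ, hLL]
  have hmidpow : ιF (Dmonic Fq i * lcar Fq (e + 1) ^ qc ^ i) ^ qc
      = ιF (Dmonic Fq i) ^ qc
          * (ιF (lcar Fq e) ^ qc ^ (i + 1) * (xq Fq (i + 1) - xq Fq (i + e + 2))) := by
    rw [map_mul, mul_pow, hLL']
  rw [inv_pow, hmidpow, map_mul, map_mul, Drec i, hLL, map_pow]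
  have key : ∀ A L u v w : RatFunc Fq, A ≠ 0 → L ≠ 0 → u ≠ 0 → v ≠ 0 → w ≠ 0 →
      u - v = w → (A * u * (L * v))⁻¹ = w⁻¹ * (A * (L * v))⁻¹ - w⁻¹ * (A * u * L)⁻¹ := by
    intro A L u v w hA hL hu hv hw huv
    subst huv
    simp only [mul_inv]
    have E1 : u⁻¹ * u = 1 := inv_mul_cancel₀ hu
    have E2 : v⁻¹ * v = 1 := inv_mul_cancel₀ hv
    have E3 : (u - v)⁻¹ * (u - v) = 1 := inv_mul_cancel₀ hw
    linear_combination (A⁻¹ * L⁻¹) * (-(u⁻¹ * v⁻¹) * E3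
      + (u - v)⁻¹ * v⁻¹ * E1 - (u - v)⁻¹ * u⁻¹ * E2)
  exact key _ _ _ _ _ (pow_ne_zero _ ha) (pow_ne_zero _ hl) hx1 hx2 hx3 (by ring)

end CarAux

open CarAux

local notation "ιF" => algebraMap (Polynomial Fq) (RatFunc Fq)
local notation "qq" => Fintype.card Fq

/-- **Explicit expansion of the normalized Carlitz polynomial.**
For every `d ≥ 0`, in `K[z]` one has `E_d(z) = ∑_{i=0}^{d} z^{q^i} / (D_i · ℓ_{d-i}^{q^i})`. -/
theorem Ecar_eq_sum (d : ℕ) :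
    Ecar Fq d =
      ∑ i ∈ Finset.range (d + 1),
        C (algebraMap (Polynomial Fq) (RatFunc Fq)
              (Dmonic Fq i * lcar Fq (d - i) ^ (Fintype.card Fq) ^ i))⁻¹ *
          X ^ (Fintype.card Fq) ^ i := by
  induction d with
  | zero =>
    show C (ιF (Dmonic Fq 0))⁻¹ * em Fq 0 = _
    rw [em_zero, Dmonic_zero, map_one, inv_one, C_1, one_mul, Finset.sum_range_one]
    norm_num [Dmonic_zero, lcar_zero]
  | succ d ih =>
    have hDne : ∀ j, ιF (Dmonic Fq j) ≠ 0 := fun j =>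
      RatFunc.algebraMap_ne_zero (Dmonic_ne_zero j)
    have hEm : ∀ j, em Fq j = C (ιF (Dmonic Fq j)) * Ecar Fq j := by
      intro j
      show em Fq j = C (ιF (Dmonic Fq j)) * (C (ιF (Dmonic Fq j))⁻¹ * em Fq j)
      rw [← mul_assoc, ← C_mul, mul_inv_cancel₀ (hDne j), C_1, one_mul]
    have hne1 : xq Fq (d + 1) - xq Fq 0 ≠ 0 := by
      have := xq_sub_ne (Fq := Fq) 0 (d + 1) (by omega)
      intro h0; apply this; linear_combination -h0
    have hstep : Ecar Fq (d + 1)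
        = C ((xq Fq (d + 1) - xq Fq 0)⁻¹) * ((Ecar Fq d) ^ qq - Ecar Fq d) := by
      show C (ιF (Dmonic Fq (d + 1)))⁻¹ * em Fq (d + 1) = _
      rw [em_succ, hEm d, mul_pow, ← C_pow]
      rw [Drec d]
      rw [mul_inv, C_mul]
      have hC : (C (ιF (Dmonic Fq d) ^ qq)⁻¹ : Polynomial (RatFunc Fq))
          * C (ιF (Dmonic Fq d) ^ qq) = 1 := by
        rw [← C_mul, inv_mul_cancel₀ (pow_ne_zero _ (hDne d)), C_1]
      calc C (ιF (Dmonic Fq d) ^ qq)⁻¹ * C (xq Fq (d + 1) - xq Fq 0)⁻¹ *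
            (C (ιF (Dmonic Fq d) ^ qq) * Ecar Fq d ^ qq -
              C (ιF (Dmonic Fq d) ^ (qq - 1)) * (C (ιF (Dmonic Fq d)) * Ecar Fq d))
          = C (xq Fq (d + 1) - xq Fq 0)⁻¹ *
            ((C (ιF (Dmonic Fq d) ^ qq)⁻¹ * C (ιF (Dmonic Fq d) ^ qq)) * Ecar Fq d ^ qq -
             (C (ιF (Dmonic Fq d) ^ qq)⁻¹ *
               (C (ιF (Dmonic Fq d) ^ (qq - 1)) * C (ιF (Dmonic Fq d)))) * Ecar Fq d) := by
            ring
        _ = _ := by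
            rw [hC, ← C_mul, pow_qc_sub_one_mul, ← C_mul,
              inv_mul_cancel₀ (pow_ne_zero _ (hDne d)), C_1]
            ring
    have hfr : (∑ i ∈ Finset.range (d + 1),
          C (ιF (Dmonic Fq i * lcar Fq (d - i) ^ qq ^ i))⁻¹ * X ^ qq ^ i) ^ qq
        = ∑ i ∈ Finset.range (d + 1),
          C ((ιF (Dmonic Fq i * lcar Fq (d - i) ^ qq ^ i))⁻¹ ^ qq) * X ^ qq ^ (i + 1) := by
      have h1 := sum_pow_card (pcharPK (Fq := Fq)) 1 (Finset.range (d + 1))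
        (fun i => C (ιF (Dmonic Fq i * lcar Fq (d - i) ^ qq ^ i))⁻¹ * X ^ qq ^ i)
      rw [pow_one] at h1
      rw [h1]
      refine Finset.sum_congr rfl fun i _ => ?_
      rw [mul_pow, ← C_pow, ← pow_mul, ← pow_succ]
    rw [hstep, ih, hfr, mul_sub, Finset.mul_sum, Finset.mul_sum]
    conv_rhs => rw [Finset.sum_range_succ' _ (d + 1), Finset.sum_range_succ _ d]
    rw [Finset.sum_range_succ (fun i => C (xq Fq (d + 1) - xq Fq 0)⁻¹ *
      (C ((ιF (Dmonic Fq i * lcar Fq (d - i) ^ qq ^ i))⁻¹ ^ qq) * X ^ qq ^ (i + 1))) d]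
    rw [Finset.sum_range_succ' (fun i => C (xq Fq (d + 1) - xq Fq 0)⁻¹ *
      (C (ιF (Dmonic Fq i * lcar Fq (d - i) ^ qq ^ i))⁻¹ * X ^ qq ^ i)) d]
    have hmid : ∀ i ∈ Finset.range d,
        (C (ιF (Dmonic Fq (i + 1) * lcar Fq (d + 1 - (i + 1)) ^ qq ^ (i + 1)))⁻¹
            * X ^ qq ^ (i + 1) : Polynomial (RatFunc Fq))
          = C (xq Fq (d + 1) - xq Fq 0)⁻¹ *
              (C ((ιF (Dmonic Fq i * lcar Fq (d - i) ^ qq ^ i))⁻¹ ^ qq) * X ^ qq ^ (i + 1))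
            - C (xq Fq (d + 1) - xq Fq 0)⁻¹ *
              (C (ιF (Dmonic Fq (i + 1) * lcar Fq (d - (i + 1)) ^ qq ^ (i + 1)))⁻¹
                * X ^ qq ^ (i + 1)) := by
      intro i hi
      have hid : i < d := Finset.mem_range.1 hi
      obtain ⟨e, he⟩ : ∃ e, d - i = e + 1 := ⟨d - i - 1, by omega⟩
      have he3 : d + 1 - (i + 1) = e + 1 := by omega
      have he2 : d - (i + 1) = e := by omega
      have he4 : d + 1 = i + e + 2 := by omega
      rw [he3, he, he2, he4, scalar_mid i e, C_sub, C_mul, C_mul]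
      ring
    rw [Finset.sum_congr rfl hmid, Finset.sum_sub_distrib]
    have hlo : (C (ιF (Dmonic Fq 0 * lcar Fq (d + 1 - 0) ^ qq ^ 0))⁻¹ * X ^ qq ^ 0 :
          Polynomial (RatFunc Fq))
        = - (C (xq Fq (d + 1) - xq Fq 0)⁻¹ *
            (C (ιF (Dmonic Fq 0 * lcar Fq (d - 0) ^ qq ^ 0))⁻¹ * X ^ qq ^ 0)) := by
      have hsc : (ιF (Dmonic Fq 0 * lcar Fq (d + 1 - 0) ^ qq ^ 0))⁻¹
          = -((xq Fq (d + 1) - xq Fq 0)⁻¹ * (ιF (Dmonic Fq 0 * lcar Fq (d - 0) ^ qq ^ 0))⁻¹) := by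
        rw [Nat.sub_zero, Nat.sub_zero, pow_zero, pow_one, pow_one, Dmonic_zero, one_mul,
          one_mul, iota_lcar d, xq_zero]
        have hl : ιF (lcar Fq d) ≠ 0 := RatFunc.algebraMap_ne_zero (lcar_ne_zero d)
        have hz : xq Fq (d + 1) - ιF X ≠ 0 := by
          have := hne1; rwa [xq_zero] at this
        rw [mul_inv, show ((ιF X : RatFunc Fq) - xq Fq (d + 1))⁻¹
            = -(xq Fq (d + 1) - ιF X)⁻¹ from by rw [← inv_neg, neg_sub]]
        ring
      rw [hsc, C_neg, C_mul]
      ring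
    have hhi : (C (ιF (Dmonic Fq (d + 1) * lcar Fq (d + 1 - (d + 1)) ^ qq ^ (d + 1)))⁻¹
          * X ^ qq ^ (d + 1) : Polynomial (RatFunc Fq))
        = C (xq Fq (d + 1) - xq Fq 0)⁻¹ *
            (C ((ιF (Dmonic Fq d * lcar Fq (d - d) ^ qq ^ d))⁻¹ ^ qq) * X ^ qq ^ (d + 1)) := by
      have hsc : (ιF (Dmonic Fq (d + 1) * lcar Fq (d + 1 - (d + 1)) ^ qq ^ (d + 1)))⁻¹
          = (xq Fq (d + 1) - xq Fq 0)⁻¹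
              * ((ιF (Dmonic Fq d * lcar Fq (d - d) ^ qq ^ d))⁻¹ ^ qq) := by
        rw [Nat.sub_self, Nat.sub_self, lcar_zero, one_pow, one_pow, mul_one, mul_one,
          Drec d, inv_pow, ← map_pow, mul_inv]
        ring
      rw [hsc, C_mul]
      ring
    rw [hlo, hhi]
    ring
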